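/- Let v = (x, y) ∈ ℝ² with y ≠ 0 and x/y irrational. Then the SL(2,ℤ)-orbit {γ·v : γ ∈ SL(2,ℤ)} is dense in ℝ². (This is the key density fact underlying the paper's claim that the quotient ℝ²/SL(2,ℤ) admits no nonconstant continuous maps to any Hausdorff space.) -/

import Mathlib

/-- The linear action of `SL(2,ℤ)` on `ℝ²`. -/
def SL2ZAct (γ : Matrix.SpecialLinearGroup (Fin 2) ℤ) (v : Fin 2 → ℝ) : Fin 2 → ℝ :=
  ((γ : Matrix (Fin 2) (Fin 2) ℤ).map (Int.cast : ℤ → ℝ)).mulVec v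

/-- Build an element of SL(2,ℤ) from entries. -/
def mkSL (a b c d : ℤ) (h : a * d - b * c = 1) : Matrix.SpecialLinearGroup (Fin 2) ℤ :=
  ⟨!![a, b; c, d], by rw [Matrix.det_fin_two_of]; exact h⟩

lemma SL2ZAct_mkSL (a b c d : ℤ) (h : a * d - b * c = 1) (x y : ℝ) :
    SL2ZAct (mkSL a b c d h) ![x, y] = ![(a : ℝ) * x + b * y, (c : ℝ) * x + d * y] := by
  funext i
  fin_cases i <;>
    simp [SL2ZAct, mkSL, Matrix.mulVec, dotProduct, Fin.sum_univ_two]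

lemma SL2ZAct_mul (γ₁ γ₂ : Matrix.SpecialLinearGroup (Fin 2) ℤ) (v : Fin 2 → ℝ) :
    SL2ZAct (γ₁ * γ₂) v = SL2ZAct γ₁ (SL2ZAct γ₂ v) := by
  unfold SL2ZAct
  rw [Matrix.mulVec_mulVec, Matrix.SpecialLinearGroup.coe_mul]
  exact congrArg (fun M => Matrix.mulVec M v)
    (Matrix.map_mul (L := (γ₁ : Matrix (Fin 2) (Fin 2) ℤ))
      (M := (γ₂ : Matrix (Fin 2) (Fin 2) ℤ)) (f := Int.castRingHom ℝ))

lemma dense_zxy (x y : ℝ) (hy : y ≠ 0) (hirr : Irrational (x / y)) :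
    Dense ((AddSubgroup.closure {x, y} : AddSubgroup ℝ) : Set ℝ) := by
  rcases AddSubgroup.dense_or_cyclic (AddSubgroup.closure {x, y}) with h | ⟨a, ha⟩
  · exact h
  · exfalso
    have hx : x ∈ AddSubgroup.closure ({x, y} : Set ℝ) :=
      AddSubgroup.subset_closure (by simp)
    have hy' : y ∈ AddSubgroup.closure ({x, y} : Set ℝ) :=
      AddSubgroup.subset_closure (by simp)
    rw [ha, AddSubgroup.mem_closure_singleton] at hx hy'
    obtain ⟨n, hn⟩ := hx
    obtain ⟨m, hm⟩ := hy'
    have ha0 : a ≠ 0 := by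
      rintro rfl; simp at hm; exact hy hm.symm
    have hm0 : (m : ℝ) ≠ 0 := by
      rintro hm0; rw [zsmul_eq_mul, hm0, zero_mul] at hm; exact hy hm.symm
    apply hirr
    refine ⟨(n : ℚ) / (m : ℚ), ?_⟩
    rw [zsmul_eq_mul] at hn hm
    push_cast
    rw [← hn, ← hm]
    field_simp

lemma exists_coprime_small (x y : ℝ) (hy : y ≠ 0) (hirr : Irrational (x / y))
    (ε : ℝ) (hε : 0 < ε) :
    ∃ c d : ℤ, IsCoprime c d ∧ 0 < (c : ℝ) * x + d * y ∧ (c : ℝ) * x + d * y < ε := by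
  have hd := dense_zxy x y hy hirr
  obtain ⟨z, hz, hz2⟩ := hd.exists_mem_open isOpen_Ioo
    (Set.nonempty_Ioo.2 hε : (Set.Ioo (0:ℝ) ε).Nonempty)
  rw [SetLike.mem_coe, AddSubgroup.mem_closure_pair] at hz
  obtain ⟨c, d, hcd⟩ := hz
  rw [zsmul_eq_mul, zsmul_eq_mul] at hcd
  obtain ⟨hz0, hzε⟩ := hz2
  have hne : c ≠ 0 ∨ d ≠ 0 := by
    by_contra h
    push_neg at h
    rw [h.1, h.2] at hcd
    simp at hcd
    rw [← hcd] at hz0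
    exact lt_irrefl _ hz0
  set g : ℕ := Int.gcd c d with hg
  have hgpos : 0 < g := Int.gcd_pos_iff.2 hne
  have hgR : (0:ℝ) < (g:ℝ) := by exact_mod_cast hgpos
  have hdvd1 : (g:ℤ) ∣ c := Int.gcd_dvd_left c d
  have hdvd2 : (g:ℤ) ∣ d := Int.gcd_dvd_right c d
  have hc : ((c / (g:ℤ) : ℤ) : ℝ) * (g:ℝ) = (c:ℝ) := by
    exact_mod_cast congrArg (Int.cast : ℤ → ℝ) (Int.ediv_mul_cancel hdvd1)
  have hd2 : ((d / (g:ℤ) : ℤ) : ℝ) * (g:ℝ) = (d:ℝ) := by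
    exact_mod_cast congrArg (Int.cast : ℤ → ℝ) (Int.ediv_mul_cancel hdvd2)
  have hval : ((c / (g:ℤ) : ℤ) : ℝ) * x + ((d / (g:ℤ) : ℤ) : ℝ) * y = z / g := by
    rw [eq_div_iff (ne_of_gt hgR), ← hcd]
    linear_combination x * hc + y * hd2
  refine ⟨c / g, d / g, Int.isCoprime_iff_gcd_eq_one.2 (Int.gcd_div_gcd_div_gcd hgpos), ?_, ?_⟩
  · rw [hval]; exact div_pos hz0 hgR
  · rw [hval]
    have hg1 : (1:ℝ) ≤ (g:ℝ) := by exact_mod_cast hgpos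
    have : z / (g:ℝ) ≤ z := by
      rw [div_le_iff₀ hgR]
      nlinarith
    linarith

lemma near_axis (x y : ℝ) (hy : y ≠ 0) (hirr : Irrational (x / y))
    (t ε : ℝ) (hε : 0 < ε) :
    ∃ a b c d : ℤ, a * d - b * c = 1 ∧
      |(a : ℝ) * x + b * y - t| < ε ∧ |(c : ℝ) * x + d * y| < ε := by
  obtain ⟨c, d, hcop, hs0, hsε⟩ := exists_coprime_small x y hy hirr ε hε
  obtain ⟨u, v, huv⟩ := hcop
  set s : ℝ := (c:ℝ) * x + (d:ℝ) * y with hs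
  set r : ℝ := (v:ℝ) * x - (u:ℝ) * y with hr
  set k : ℤ := ⌈(t - r) / s⌉ with hk
  have h1 : t - r ≤ (k:ℝ) * s := by
    have h := Int.le_ceil ((t - r) / s)
    rwa [div_le_iff₀ hs0] at h
  have h2 : (k:ℝ) * s < t - r + s := by
    have h := mul_lt_mul_of_pos_right (Int.ceil_lt_add_one ((t - r) / s)) hs0
    rwa [add_mul, div_mul_cancel₀ _ (ne_of_gt hs0), one_mul] at h
  refine ⟨v + k * c, -u + k * d, c, d, by linear_combination huv, ?_, ?_⟩
  · have hval : ((v + k * c : ℤ) : ℝ) * x + ((-u + k * d : ℤ) : ℝ) * y = r + (k:ℝ) * s := by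
      rw [hs, hr]; push_cast; ring
    rw [hval, abs_lt]
    constructor <;> nlinarith
  · rw [abs_lt]
    constructor <;> nlinarith

/-- If `v = (x, y)` with `y ≠ 0` and `x / y` irrational, then the `SL(2,ℤ)`-orbit
of `v` is dense in `ℝ²`. -/
theorem dense_SL2Z_orbit_of_irrational_slope (x y : ℝ) (hy : y ≠ 0)
    (hirr : Irrational (x / y)) :
    Dense {w : Fin 2 → ℝ | ∃ γ : Matrix.SpecialLinearGroup (Fin 2) ℤ,
      SL2ZAct γ ![x, y] = w} := by
  rw [Metric.dense_iff]
  intro w ε hε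
  have key : ∃ (A C : ℤ) (t : ℝ), IsCoprime A C ∧
      |(A:ℝ) * t - w 0| < ε/4 ∧ |(C:ℝ) * t - w 1| < ε/4 := by
    by_cases h0 : w 0 = 0
    · refine ⟨0, 1, w 1, isCoprime_zero_left.2 isUnit_one, ?_, ?_⟩
      · simp [h0]; linarith
      · simp; linarith
    · have hw0 : (0:ℝ) < |w 0| := abs_pos.2 h0
      obtain ⟨q, hq⟩ := exists_rat_near (w 1 / w 0)
        (show (0:ℝ) < ε/(4*|w 0|) by positivity)
      have hden : ((q.den:ℤ):ℝ) ≠ 0 := by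
        have := q.den_pos
        push_cast
        positivity
      refine ⟨(q.den : ℤ), q.num, w 0 / ((q.den:ℤ):ℝ), ?_, ?_, ?_⟩
      · rw [Int.isCoprime_iff_gcd_eq_one]
        have hred := q.reduced
        unfold Int.gcd
        simp only [Int.natAbs_natCast]
        exact Nat.coprime_comm.mp hred
      · have h1 : ((q.den:ℤ):ℝ) * (w 0 / ((q.den:ℤ):ℝ)) = w 0 := by
          field_simp
        rw [h1, sub_self, abs_zero]
        linarith
      · have h2 : (q.num:ℝ) * (w 0 / ((q.den:ℤ):ℝ)) - w 1 = ((q:ℝ) - w 1/w 0) * w 0 := by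
          rw [Rat.cast_def]
          field_simp
          push_cast
          ring
        rw [h2, abs_mul, abs_sub_comm]
        calc |w 1 / w 0 - (q:ℝ)| * |w 0| < (ε/(4*|w 0|)) * |w 0| :=
              mul_lt_mul_of_pos_right hq hw0
          _ = ε/4 := by field_simp
  obtain ⟨A, C, t, hAC, hA, hC⟩ := key
  obtain ⟨u, v, huv⟩ := hAC
  have hdet : A * u - (-v) * C = 1 := by linear_combination huv
  set B : ℤ := -v with hB
  set D : ℤ := u with hD
  have hdet' : A * D - B * C = 1 := hdet
  set K : ℝ := |(A:ℝ)| + |(B:ℝ)| + |(C:ℝ)| + |(D:ℝ)| + 1 with hK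
  have hK0 : 0 < K := by positivity
  have hδ0 : 0 < ε/(4*K) := by positivity
  obtain ⟨a, b, c, d, hd2, hp1, hp2⟩ := near_axis x y hy hirr t (ε/(4*K)) hδ0
  set p1 : ℝ := (a:ℝ) * x + b * y with hp1d
  set p2 : ℝ := (c:ℝ) * x + d * y with hp2d
  have est : ∀ (P Q : ℤ) (c0 : ℝ), |(P:ℝ)*t - c0| < ε/4 → |(P:ℝ)| + |(Q:ℝ)| + 1 ≤ K →
      |(P:ℝ)*p1 + Q*p2 - c0| < ε := by
    intro P Q c0 h1 h2
    have e : (P:ℝ)*p1 + Q*p2 - c0 = (P:ℝ)*(p1 - t) + (Q:ℝ)*p2 + ((P:ℝ)*t - c0) := by ring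
    have b1 : |(P:ℝ)*(p1 - t)| ≤ |(P:ℝ)| * (ε/(4*K)) := by
      rw [abs_mul]
      exact mul_le_mul_of_nonneg_left hp1.le (abs_nonneg _)
    have b2 : |(Q:ℝ)*p2| ≤ |(Q:ℝ)| * (ε/(4*K)) := by
      rw [abs_mul]
      exact mul_le_mul_of_nonneg_left hp2.le (abs_nonneg _)
    have bsum : (|(P:ℝ)| + |(Q:ℝ)|) * (ε/(4*K)) ≤ K * (ε/(4*K)) := by
      apply mul_le_mul_of_nonneg_right _ hδ0.le
      linarith
    have hKδ : K * (ε/(4*K)) = ε/4 := by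
      field_simp
    calc |(P:ℝ)*p1 + Q*p2 - c0|
        = |(P:ℝ)*(p1 - t) + (Q:ℝ)*p2 + ((P:ℝ)*t - c0)| := by rw [e]
      _ ≤ |(P:ℝ)*(p1 - t) + (Q:ℝ)*p2| + |(P:ℝ)*t - c0| := abs_add_le _ _
      _ ≤ |(P:ℝ)*(p1 - t)| + |(Q:ℝ)*p2| + |(P:ℝ)*t - c0| := by
          have := abs_add_le ((P:ℝ)*(p1 - t)) ((Q:ℝ)*p2)
          linarith
      _ < ε := by nlinarith [hKδ, bsum, b1, b2, h1]
  refine ⟨SL2ZAct (mkSL A B C D hdet' * mkSL a b c d hd2) ![x, y], ?_, ⟨_, rfl⟩⟩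
  rw [Metric.mem_ball, SL2ZAct_mul, SL2ZAct_mkSL, SL2ZAct_mkSL]
  rw [dist_pi_lt_iff hε]
  intro i
  fin_cases i
  · simpa [Real.dist_eq] using est A B (w 0) hA (by
      nlinarith [abs_nonneg ((C:ℝ)), abs_nonneg ((D:ℝ))])
  · simpa [Real.dist_eq] using est C D (w 1) hC (by
      nlinarith [abs_nonneg ((A:ℝ)), abs_nonneg ((B:ℝ))])
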